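/- Consider a series system of two components with independent states, perfect inspections, equal repair costs C_{R,1} = C_{R,2} = C_R with 0 < C_R ≤ C_F/2. Then the expected posterior loss of inspecting component c_i under the local metric equals L^L_ω(i) = p_i·C_R + min{ C_R, p_j·C_F }, where j is the other component. -/
import Mathlib


open scoped Classical

/-- Probability of an event `E` under weights `w` on a finite outcome space. -/
noncomputable def Pr {Ω : Type*} [Fintype Ω] (w : Ω → ℝ) (E : Ω → Prop) : ℝ :=
  ∑ ω ∈ Finset.univ.filter E, w ω

/-- Conditional probability `P[A | B]`. -/
noncomputable def cPr {Ω : Type*} [Fintype Ω] (w : Ω → ℝ) (A B : Ω → Prop) : ℝ :=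
  Pr w (fun ω => A ω ∧ B ω) / Pr w B

/-- Conditional expectation `E[f | B]` (expectation of `f` under the posterior given `B`). -/
noncomputable def cExp {Ω : Type*} [Fintype Ω] (w : Ω → ℝ) (f : Ω → ℝ) (B : Ω → Prop) : ℝ :=
  (∑ ω ∈ Finset.univ.filter B, w ω * f ω) / Pr w B

/-- Total maintenance loss for a two-component series system: repairing component `c_k`
(`A.1`, `A.2`) costs `CR` and makes its post-action state working (perfect repair);
the failure cost `CF` is paid iff the post-action series system fails, i.e. iff some
post-action component state is `false`. -/
noncomputable def seriesLoss {Ω : Type*} (CR CF : ℝ) (s1 s2 : Ω → Bool)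
    (A : Bool × Bool) (ω : Ω) : ℝ :=
  CR * ((if A.1 = true then 1 else 0) + (if A.2 = true then 1 else 0))
    + CF * (if (A.1 || s1 ω) = false ∨ (A.2 || s2 ω) = false then 1 else 0)

section Aux

variable {Ω : Type*} [Fintype Ω]

lemma Pr_congr (w : Ω → ℝ) (A B : Ω → Prop) (h : ∀ ω, A ω ↔ B ω) :
    Pr w A = Pr w B := by
  unfold Pr
  congr 1
  exact Finset.filter_congr fun ω _ => h ω

lemma Pr_nonneg (w : Ω → ℝ) (hw0 : ∀ ω, 0 ≤ w ω) (E : Ω → Prop) : 0 ≤ Pr w E :=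
  Finset.sum_nonneg fun ω _ => hw0 ω

lemma Pr_false (w : Ω → ℝ) : Pr w (fun _ => False) = 0 := by
  simp [Pr]

lemma Pr_total (w : Ω → ℝ) (hw1 : ∑ ω, w ω = 1) (s : Ω → Bool) :
    Pr w (fun ω => s ω = false) + Pr w (fun ω => s ω = true) = 1 := by
  rw [Pr_congr w (fun ω => s ω = true) (fun ω => ¬ (s ω = false)) (by simp)]
  unfold Pr
  rw [Finset.sum_filter_add_sum_filter_not]
  exact hw1

lemma cExp_seriesLoss (w : Ω → ℝ) (CR CF : ℝ) (s1 s2 : Ω → Bool) (A : Bool × Bool)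
    (B : Ω → Prop) (hB : Pr w B ≠ 0) :
    cExp w (seriesLoss CR CF s1 s2 A) B
      = CR * ((if A.1 = true then 1 else 0) + (if A.2 = true then 1 else 0))
        + CF * (Pr w (fun ω => ((A.1 || s1 ω) = false ∨ (A.2 || s2 ω) = false) ∧ B ω)
            / Pr w B) := by
  have hnum : (∑ ω ∈ Finset.univ.filter B, w ω * seriesLoss CR CF s1 s2 A ω)
      = (CR * ((if A.1 = true then 1 else 0) + (if A.2 = true then 1 else 0))) * Pr w B
        + CF * Pr w (fun ω => ((A.1 || s1 ω) = false ∨ (A.2 || s2 ω) = false) ∧ B ω) := by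
    have h1 : ∀ ω ∈ Finset.univ.filter B,
        w ω * seriesLoss CR CF s1 s2 A ω
          = (CR * ((if A.1 = true then 1 else 0) + (if A.2 = true then 1 else 0))) * w ω
            + CF * (if ((A.1 || s1 ω) = false ∨ (A.2 || s2 ω) = false) then w ω else 0) := by
      intro ω _
      unfold seriesLoss
      by_cases h : ((A.1 || s1 ω) = false ∨ (A.2 || s2 ω) = false)
      · rw [if_pos h, if_pos h]; ring
      · rw [if_neg h, if_neg h]; ring
    rw [Finset.sum_congr rfl h1, Finset.sum_add_distrib, ← Finset.mul_sum, ← Finset.mul_sum,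
      ← Finset.sum_filter, Finset.filter_filter]
    unfold Pr
    congr 2
    refine Finset.sum_congr ?_ fun _ _ => rfl
    ext ω
    simp only [Finset.mem_filter, Finset.mem_univ, true_and]
    exact and_comm
  unfold cExp
  rw [hnum]
  field_simp

lemma main_one (w : Ω → ℝ) (hw0 : ∀ ω, 0 ≤ w ω) (hw1 : ∑ ω, w ω = 1)
    (s1 s2 : Ω → Bool)
    (hind : ∀ a b : Bool, Pr w (fun ω => s1 ω = a ∧ s2 ω = b)
        = Pr w (fun ω => s1 ω = a) * Pr w (fun ω => s2 ω = b))
    (CR CF : ℝ) (hCR : 0 < CR) (hCRF : CR ≤ CF / 2) :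
    Pr w (fun ω => s1 ω = false) *
        (Finset.univ.inf' Finset.univ_nonempty fun A : Bool × Bool =>
          cExp w (seriesLoss CR CF s1 s2 A) (fun ω => s1 ω = false))
      + Pr w (fun ω => s1 ω = true) *
        (Finset.univ.inf' Finset.univ_nonempty fun A : Bool × Bool =>
          cExp w (seriesLoss CR CF s1 s2 A) (fun ω => s1 ω = true))
      = Pr w (fun ω => s1 ω = false) * CR
          + min CR (Pr w (fun ω => s2 ω = false) * CF) := by
  set p2 := Pr w (fun ω => s2 ω = false) with hp2def
  have hp2n : 0 ≤ p2 := Pr_nonneg w hw0 _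
  have hCF : 0 ≤ CF := by linarith
  have hpCF : 0 ≤ p2 * CF := mul_nonneg hp2n hCF
  have h2CR : 2 * CR ≤ CF := by linarith
  have hmin1 : min CR (p2 * CF) ≤ CR := min_le_left _ _
  have hmin2 : min CR (p2 * CF) ≤ p2 * CF := min_le_right _ _
  have hsum := Pr_total w hw1 s1
  have hfalse : Pr w (fun ω => s1 ω = false) *
        (Finset.univ.inf' Finset.univ_nonempty fun A : Bool × Bool =>
          cExp w (seriesLoss CR CF s1 s2 A) (fun ω => s1 ω = false))
      = Pr w (fun ω => s1 ω = false) * (CR + min CR (p2 * CF)) := by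
    rcases eq_or_ne (Pr w (fun ω => s1 ω = false)) 0 with h0 | h0
    · rw [h0]; ring
    · have eFF : cExp w (seriesLoss CR CF s1 s2 (false, false)) (fun ω => s1 ω = false)
          = CF := by
        rw [cExp_seriesLoss w CR CF s1 s2 (false, false) _ h0,
          Pr_congr w _ (fun ω => s1 ω = false)
            (fun ω => by cases h1 : s1 ω <;> cases h2 : s2 ω <;> simp [h1, h2]),
          div_self h0]
        norm_num
      have eFT : cExp w (seriesLoss CR CF s1 s2 (false, true)) (fun ω => s1 ω = false)
          = CR + CF := by
        rw [cExp_seriesLoss w CR CF s1 s2 (false, true) _ h0,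
          Pr_congr w _ (fun ω => s1 ω = false)
            (fun ω => by cases h1 : s1 ω <;> cases h2 : s2 ω <;> simp [h1, h2]),
          div_self h0]
        norm_num
      have eTF : cExp w (seriesLoss CR CF s1 s2 (true, false)) (fun ω => s1 ω = false)
          = CR + p2 * CF := by
        rw [cExp_seriesLoss w CR CF s1 s2 (true, false) _ h0,
          Pr_congr w _ (fun ω => s1 ω = false ∧ s2 ω = false)
            (fun ω => by cases h1 : s1 ω <;> cases h2 : s2 ω <;> simp [h1, h2]),
          hind false false]
        rw [mul_comm (Pr w fun ω => s1 ω = false) p2, mul_div_assoc, div_self h0]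
        norm_num
        ring
      have eTT : cExp w (seriesLoss CR CF s1 s2 (true, true)) (fun ω => s1 ω = false)
          = 2 * CR := by
        rw [cExp_seriesLoss w CR CF s1 s2 (true, true) _ h0,
          Pr_congr w _ (fun _ => False)
            (fun ω => by cases h1 : s1 ω <;> cases h2 : s2 ω <;> simp [h1, h2]),
          Pr_false]
        norm_num
        ring
      have hinf : (Finset.univ.inf' Finset.univ_nonempty fun A : Bool × Bool =>
            cExp w (seriesLoss CR CF s1 s2 A) (fun ω => s1 ω = false))
          = CR + min CR (p2 * CF) := by
        apply le_antisymm
        · rw [← min_add_add_left]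
          refine le_min ?_ ?_
          · exact (Finset.inf'_le _ (Finset.mem_univ (true, true))).trans_eq
              (by rw [eTT]; ring)
          · exact (Finset.inf'_le _ (Finset.mem_univ (true, false))).trans_eq eTF
        · refine Finset.le_inf' _ _ ?_
          rintro ⟨a, b⟩ -
          cases a <;> cases b
          · rw [eFF]; linarith
          · rw [eFT]; linarith
          · rw [eTF]; linarith
          · rw [eTT]; linarith
      rw [hinf]
  have htrue : Pr w (fun ω => s1 ω = true) *
        (Finset.univ.inf' Finset.univ_nonempty fun A : Bool × Bool =>
          cExp w (seriesLoss CR CF s1 s2 A) (fun ω => s1 ω = true))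
      = Pr w (fun ω => s1 ω = true) * min CR (p2 * CF) := by
    rcases eq_or_ne (Pr w (fun ω => s1 ω = true)) 0 with h0 | h0
    · rw [h0]; ring
    · have eFF : cExp w (seriesLoss CR CF s1 s2 (false, false)) (fun ω => s1 ω = true)
          = p2 * CF := by
        rw [cExp_seriesLoss w CR CF s1 s2 (false, false) _ h0,
          Pr_congr w _ (fun ω => s1 ω = true ∧ s2 ω = false)
            (fun ω => by cases h1 : s1 ω <;> cases h2 : s2 ω <;> simp [h1, h2]),
          hind true false]
        rw [mul_comm (Pr w fun ω => s1 ω = true) p2, mul_div_assoc, div_self h0]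
        norm_num
        ring
      have eFT : cExp w (seriesLoss CR CF s1 s2 (false, true)) (fun ω => s1 ω = true)
          = CR := by
        rw [cExp_seriesLoss w CR CF s1 s2 (false, true) _ h0,
          Pr_congr w _ (fun _ => False)
            (fun ω => by cases h1 : s1 ω <;> cases h2 : s2 ω <;> simp [h1, h2]),
          Pr_false]
        norm_num
      have eTF : cExp w (seriesLoss CR CF s1 s2 (true, false)) (fun ω => s1 ω = true)
          = CR + p2 * CF := by
        rw [cExp_seriesLoss w CR CF s1 s2 (true, false) _ h0,
          Pr_congr w _ (fun ω => s1 ω = true ∧ s2 ω = false)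
            (fun ω => by cases h1 : s1 ω <;> cases h2 : s2 ω <;> simp [h1, h2]),
          hind true false]
        rw [mul_comm (Pr w fun ω => s1 ω = true) p2, mul_div_assoc, div_self h0]
        norm_num
        ring
      have eTT : cExp w (seriesLoss CR CF s1 s2 (true, true)) (fun ω => s1 ω = true)
          = 2 * CR := by
        rw [cExp_seriesLoss w CR CF s1 s2 (true, true) _ h0,
          Pr_congr w _ (fun _ => False)
            (fun ω => by cases h1 : s1 ω <;> cases h2 : s2 ω <;> simp [h1, h2]),
          Pr_false]
        norm_num
        ring
      have hinf : (Finset.univ.inf' Finset.univ_nonempty fun A : Bool × Bool =>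
            cExp w (seriesLoss CR CF s1 s2 A) (fun ω => s1 ω = true))
          = min CR (p2 * CF) := by
        apply le_antisymm
        · refine le_min ?_ ?_
          · exact (Finset.inf'_le _ (Finset.mem_univ (false, true))).trans_eq eFT
          · exact (Finset.inf'_le _ (Finset.mem_univ (false, false))).trans_eq eFF
        · refine Finset.le_inf' _ _ ?_
          rintro ⟨a, b⟩ -
          cases a <;> cases b
          · rw [eFF]; linarith
          · rw [eFT]; linarith
          · rw [eTF]; linarith
          · rw [eTT]; linarith
      rw [hinf]
  rw [hfalse, htrue]
  linear_combination (min CR (p2 * CF)) * hsum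

lemma inf'_swap (w : Ω → ℝ) (CR CF : ℝ) (s1 s2 : Ω → Bool) (B : Ω → Prop) :
    (Finset.univ.inf' Finset.univ_nonempty fun A : Bool × Bool =>
        cExp w (seriesLoss CR CF s1 s2 A) B)
      = (Finset.univ.inf' Finset.univ_nonempty fun A : Bool × Bool =>
        cExp w (seriesLoss CR CF s2 s1 A) B) := by
  have hswap : ∀ A : Bool × Bool,
      cExp w (seriesLoss CR CF s2 s1 A) B
        = cExp w (seriesLoss CR CF s1 s2 (A.2, A.1)) B := by
    intro A
    unfold cExp
    congr 1
    refine Finset.sum_congr rfl fun ω _ => ?_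
    rcases A with ⟨a, b⟩
    unfold seriesLoss
    cases a <;> cases b <;> cases h1 : s1 ω <;> cases h2 : s2 ω <;> simp [h1, h2]
  apply le_antisymm
  · refine Finset.le_inf' _ _ fun A _ => ?_
    rw [hswap A]
    exact Finset.inf'_le _ (Finset.mem_univ (A.2, A.1))
  · refine Finset.le_inf' _ _ fun A _ => ?_
    have : cExp w (seriesLoss CR CF s1 s2 A) B
        = cExp w (seriesLoss CR CF s2 s1 (A.2, A.1)) B := by
      rw [hswap (A.2, A.1)]
    rw [this]
    exact Finset.inf'_le _ (Finset.mem_univ (A.2, A.1))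

end Aux

/-- For a series system of two components with independent states, perfect
inspections, and equal repair costs `0 < C_R ≤ C_F/2`, the expected posterior loss of
inspecting component `c_i` under the local metric equals
`L^L_ω(i) = p_i·C_R + min{ C_R, p_j·C_F }`, where `j` is the other component. -/
theorem series_two_component_local_posterior_loss {Ω : Type*} [Fintype Ω] (w : Ω → ℝ)
    (hw0 : ∀ ω, 0 ≤ w ω) (hw1 : ∑ ω, w ω = 1)
    (s1 s2 : Ω → Bool)
    (hind : ∀ a b : Bool, Pr w (fun ω => s1 ω = a ∧ s2 ω = b)
        = Pr w (fun ω => s1 ω = a) * Pr w (fun ω => s2 ω = b))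
    (CR CF : ℝ) (hCR : 0 < CR) (hCRF : CR ≤ CF / 2) :
    (Pr w (fun ω => s1 ω = false) *
        (Finset.univ.inf' Finset.univ_nonempty fun A : Bool × Bool =>
          cExp w (seriesLoss CR CF s1 s2 A) (fun ω => s1 ω = false))
      + Pr w (fun ω => s1 ω = true) *
        (Finset.univ.inf' Finset.univ_nonempty fun A : Bool × Bool =>
          cExp w (seriesLoss CR CF s1 s2 A) (fun ω => s1 ω = true))
      = Pr w (fun ω => s1 ω = false) * CR
          + min CR (Pr w (fun ω => s2 ω = false) * CF))
    ∧ (Pr w (fun ω => s2 ω = false) *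
        (Finset.univ.inf' Finset.univ_nonempty fun A : Bool × Bool =>
          cExp w (seriesLoss CR CF s1 s2 A) (fun ω => s2 ω = false))
      + Pr w (fun ω => s2 ω = true) *
        (Finset.univ.inf' Finset.univ_nonempty fun A : Bool × Bool =>
          cExp w (seriesLoss CR CF s1 s2 A) (fun ω => s2 ω = true))
      = Pr w (fun ω => s2 ω = false) * CR
          + min CR (Pr w (fun ω => s1 ω = false) * CF)) := by
  have hind' : ∀ a b : Bool, Pr w (fun ω => s2 ω = a ∧ s1 ω = b)
      = Pr w (fun ω => s2 ω = a) * Pr w (fun ω => s1 ω = b) := by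
    intro a b
    rw [Pr_congr w _ (fun ω => s1 ω = b ∧ s2 ω = a) (fun ω => and_comm), hind b a,
      mul_comm]
  constructor
  · exact main_one w hw0 hw1 s1 s2 hind CR CF hCR hCRF
  · have h := main_one w hw0 hw1 s2 s1 hind' CR CF hCR hCRF
    rw [inf'_swap w CR CF s1 s2 (fun ω => s2 ω = false),
      inf'_swap w CR CF s1 s2 (fun ω => s2 ω = true)]
    exact h
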